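/- arXiv:2308.03715 — 2 statements merged into one kernel-verified Lean document; each statement's English description precedes it below -/
import Mathlib

section
/- Let a ∈ C¹([0,ℓ]) with a > 0, b ∈ C([0,ℓ]) with b ≥ 0, and p ∈ C([0,T]) with p > 0. For 2 ≤ n ≤ N+1 set K^n(y) = p(t_n) a(y) and c^n(y) = p(t_n) b(y) + T̂_{n,n−1}, and let f^n ∈ C([0,ℓ]). Suppose broken polynomials u_h^1, …, u_h^{N+1} of degree k satisfy, for each n with 2 ≤ n ≤ N+1, the fully discrete L1-NIPG scheme B^n(u_h^n, v) = Σ_{m=1}^M ∫_{K_m} (f^n + T̂_{n,1} u_h^1 + Σ_{j=2}^{n−1} (T̂_{n,j} − T̂_{n,j−1}) u_h^j) v_m dy for all broken polynomials v of degree k, where B^n is the NIPG bilinear form with coefficients K^n, c^n. Then for each n with 2 ≤ n ≤ N+1, ‖u_h^n‖_{L²(0,ℓ)} ≤ τ_{n−1}^α Γ(2−α) (‖f^n‖_{L²(0,ℓ)} + T̂_{n,1} ‖u_h^1‖_{L²(0,ℓ)} + Σ_{j=2}^{n−1} (T̂_{n,j} − T̂_{n,j−1}) ‖u_h^j‖_{L²(0,ℓ)}).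 -/
/-- Graded temporal mesh `t_n = T ((n-1)/N)^r`. -/
noncomputable def tmesh (T r : ℝ) (N n : ℕ) : ℝ := T * (((n : ℝ) - 1) / (N : ℝ)) ^ r

/-- Step sizes `τ_n = t_{n+1} - t_n`. -/
noncomputable def tau (T r : ℝ) (N n : ℕ) : ℝ := tmesh T r N (n + 1) - tmesh T r N n

/-- L1 coefficients `T̂_{n,j}` (with the convention `T̂_{n,0} = 0`). -/
noncomputable def That (α T r : ℝ) (N n j : ℕ) : ℝ :=
  if j = 0 then 0 else
    ((tmesh T r N n - tmesh T r N j) ^ (1 - α) -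
        (tmesh T r N n - tmesh T r N (j + 1)) ^ (1 - α)) /
      (tau T r N j * Real.Gamma (2 - α))

/-- Node `y_m = (m-1) h` with `h = ℓ/M`. -/
noncomputable def node (ℓ : ℝ) (M m : ℕ) : ℝ := ((m : ℝ) - 1) * (ℓ / (M : ℝ))

/-- The jump `[v(y_m)]` of a broken polynomial `v = (v_1,…,v_M)` at the node `y_m`. -/
noncomputable def jump (ℓ : ℝ) (M : ℕ) (v : ℕ → Polynomial ℝ) (m : ℕ) : ℝ :=
  if m = 1 then (v 1).eval (node ℓ M 1)
  else if m = M + 1 then -((v M).eval (node ℓ M (M + 1)))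
  else (v m).eval (node ℓ M m) - (v (m - 1)).eval (node ℓ M m)

/-- The average `{v(y_m)}` of a broken polynomial `v = (v_1,…,v_M)` at the node `y_m`. -/
noncomputable def avg (ℓ : ℝ) (M : ℕ) (v : ℕ → Polynomial ℝ) (m : ℕ) : ℝ :=
  if m = 1 then (v 1).eval (node ℓ M 1)
  else if m = M + 1 then (v M).eval (node ℓ M (M + 1))
  else ((v m).eval (node ℓ M m) + (v (m - 1)).eval (node ℓ M m)) / 2

/-- The NIPG bilinear form with coefficients `K`, `c` and penalties `σ_m`:
`B(u,v) = Σ_m ∫_{K_m}(K u' v' + c u v) + Σ_m {K(y_m) u'(y_m)}[v(y_m)]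
  - Σ_m {K(y_m) v'(y_m)}[u(y_m)] + Σ_m σ_m [u(y_m)][v(y_m)]`. -/
noncomputable def nipg (ℓ : ℝ) (M : ℕ) (K c : ℝ → ℝ) (σ : ℕ → ℝ)
    (u v : ℕ → Polynomial ℝ) : ℝ :=
  (∑ m ∈ Finset.Icc 1 M, ∫ y in node ℓ M m..node ℓ M (m + 1),
      (K y * (Polynomial.derivative (u m)).eval y * (Polynomial.derivative (v m)).eval y +
        c y * (u m).eval y * (v m).eval y))
  + (∑ m ∈ Finset.Icc 1 (M + 1),
      K (node ℓ M m) * avg ℓ M (fun i => Polynomial.derivative (u i)) m * jump ℓ M v m)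
  - (∑ m ∈ Finset.Icc 1 (M + 1),
      K (node ℓ M m) * avg ℓ M (fun i => Polynomial.derivative (v i)) m * jump ℓ M u m)
  + (∑ m ∈ Finset.Icc 1 (M + 1), σ m * jump ℓ M u m * jump ℓ M v m)

/-- The broken `L²(0,ℓ)` norm of a broken polynomial. -/
noncomputable def brokenL2 (ℓ : ℝ) (M : ℕ) (v : ℕ → Polynomial ℝ) : ℝ :=
  Real.sqrt (∑ m ∈ Finset.Icc 1 M,
    ∫ y in node ℓ M m..node ℓ M (m + 1), ((v m).eval y) ^ 2)

/-- The `L²(0,ℓ)` norm of a function. -/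
noncomputable def funL2 (ℓ : ℝ) (f : ℝ → ℝ) : ℝ :=
  Real.sqrt (∫ y in (0 : ℝ)..ℓ, (f y) ^ 2)


/-- Discriminant trick. -/
lemma my_disc {A B C : ℝ} (hA : 0 ≤ A) (hC : 0 ≤ C)
    (h : ∀ lam : ℝ, 0 ≤ A - 2*lam*B + lam^2*C) : B ≤ Real.sqrt A * Real.sqrt C := by
  have hB2 : B^2 ≤ A * C := by
    rcases eq_or_lt_of_le hC with hC0 | hC0
    · have hB : B = 0 := by
        by_contra hB
        have h2 := h ((A+1)/(2*B))
        rw [← hC0] at h2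
        have he : 2*((A+1)/(2*B))*B = A+1 := by field_simp
        rw [mul_zero, add_zero, he] at h2
        linarith
      rw [hB, ← hC0]; simp
    · have h2 := h (B/C)
      have hC' : (C:ℝ) ≠ 0 := ne_of_gt hC0
      have he1 : 2*(B/C)*B = 2*(B^2/C) := by field_simp
      have he2 : (B/C)^2*C = B^2/C := by field_simp
      rw [he1, he2] at h2
      have : B^2/C ≤ A := by linarith
      calc B^2 = (B^2/C)*C := by field_simp
        _ ≤ A*C := mul_le_mul_of_nonneg_right this hC
  calc B ≤ |B| := le_abs_self B
    _ = Real.sqrt (B^2) := (Real.sqrt_sq_eq_abs B).symm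
    _ ≤ Real.sqrt (A*C) := Real.sqrt_le_sqrt hB2
    _ = _ := Real.sqrt_mul hA C

/-- Cauchy–Schwarz for interval integrals of continuous functions. -/
lemma my_cs_int {x y : ℝ} (hxy : x ≤ y) {g h : ℝ → ℝ}
    (hg : ContinuousOn g (Set.Icc x y)) (hh : ContinuousOn h (Set.Icc x y)) :
    (∫ t in x..y, g t * h t) ≤
      Real.sqrt (∫ t in x..y, (g t)^2) * Real.sqrt (∫ t in x..y, (h t)^2) := by
  have hu : Set.uIcc x y = Set.Icc x y := Set.uIcc_of_le hxy
  have hg' : ContinuousOn g (Set.uIcc x y) := hu ▸ hg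
  have hh' : ContinuousOn h (Set.uIcc x y) := hu ▸ hh
  have igh : IntervalIntegrable (fun t => g t * h t) MeasureTheory.volume x y :=
    (hg'.mul hh').intervalIntegrable
  have ig2 : IntervalIntegrable (fun t => (g t)^2) MeasureTheory.volume x y :=
    (hg'.pow 2).intervalIntegrable
  have ih2 : IntervalIntegrable (fun t => (h t)^2) MeasureTheory.volume x y :=
    (hh'.pow 2).intervalIntegrable
  apply my_disc
  · exact intervalIntegral.integral_nonneg hxy (fun t _ => sq_nonneg _)
  · exact intervalIntegral.integral_nonneg hxy (fun t _ => sq_nonneg _)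
  · intro lam
    have key : (∫ t in x..y, ((g t) - lam * h t)^2) =
        (∫ t in x..y, (g t)^2) - 2*lam*(∫ t in x..y, g t * h t)
          + lam^2*(∫ t in x..y, (h t)^2) := by
      have : ∀ t : ℝ, (g t - lam * h t)^2
          = (g t)^2 - (2*lam)*(g t * h t) + lam^2*(h t)^2 := by intro t; ring
      rw [intervalIntegral.integral_congr (fun t _ => this t)]
      rw [intervalIntegral.integral_add (((ig2.sub (igh.const_mul (2*lam))))) (ih2.const_mul _),
        intervalIntegral.integral_sub ig2 (igh.const_mul _),
        intervalIntegral.integral_const_mul, intervalIntegral.integral_const_mul]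
    rw [← key]
    exact intervalIntegral.integral_nonneg hxy (fun t _ => sq_nonneg _)

/-- Cauchy–Schwarz for sums of square roots. -/
lemma my_sum_cs (s : Finset ℕ) (a b : ℕ → ℝ) (ha : ∀ i ∈ s, 0 ≤ a i) (hb : ∀ i ∈ s, 0 ≤ b i) :
    ∑ i ∈ s, Real.sqrt (a i) * Real.sqrt (b i) ≤
      Real.sqrt (∑ i ∈ s, a i) * Real.sqrt (∑ i ∈ s, b i) := by
  have h1 : (∑ i ∈ s, Real.sqrt (a i) * Real.sqrt (b i))^2 ≤
      (∑ i ∈ s, a i) * (∑ i ∈ s, b i) := by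
    calc (∑ i ∈ s, Real.sqrt (a i) * Real.sqrt (b i))^2
        ≤ (∑ i ∈ s, Real.sqrt (a i)^2) * (∑ i ∈ s, Real.sqrt (b i)^2) :=
          Finset.sum_mul_sq_le_sq_mul_sq s _ _
      _ = _ := by
          rw [Finset.sum_congr rfl (fun i hi => Real.sq_sqrt (ha i hi)),
            Finset.sum_congr rfl (fun i hi => Real.sq_sqrt (hb i hi))]
  have hnn : 0 ≤ ∑ i ∈ s, Real.sqrt (a i) * Real.sqrt (b i) :=
    Finset.sum_nonneg fun i _ => mul_nonneg (Real.sqrt_nonneg _) (Real.sqrt_nonneg _)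
  calc ∑ i ∈ s, Real.sqrt (a i) * Real.sqrt (b i)
      = Real.sqrt ((∑ i ∈ s, Real.sqrt (a i) * Real.sqrt (b i))^2) := (Real.sqrt_sq hnn).symm
    _ ≤ Real.sqrt ((∑ i ∈ s, a i) * (∑ i ∈ s, b i)) := Real.sqrt_le_sqrt h1
    _ = _ := Real.sqrt_mul (Finset.sum_nonneg ha) _

section Mesh
variable {α T r : ℝ} {N : ℕ}

lemma tmesh_lt (hT : 0 < T) (hr : 1 ≤ r) (hN : 0 < N) {i j : ℕ}
    (hi : 1 ≤ i) (hij : i < j) : tmesh T r N i < tmesh T r N j := by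
  unfold tmesh
  have hNpos : (0:ℝ) < N := Nat.cast_pos.mpr hN
  have hi' : (1:ℝ) ≤ i := Nat.one_le_cast.mpr hi
  have hij' : (i:ℝ) < j := Nat.cast_lt.mpr hij
  apply mul_lt_mul_of_pos_left _ hT
  refine Real.rpow_lt_rpow (div_nonneg (by linarith) hNpos.le) ?_ (by linarith)
  rw [div_lt_div_iff_of_pos_right hNpos]
  linarith

lemma tmesh_le (hT : 0 < T) (hr : 1 ≤ r) (hN : 0 < N) {i j : ℕ}
    (hi : 1 ≤ i) (hij : i ≤ j) : tmesh T r N i ≤ tmesh T r N j := by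
  rcases eq_or_lt_of_le hij with rfl | h
  · exact le_refl _
  · exact (tmesh_lt hT hr hN hi h).le

lemma tmesh_nonneg (hT : 0 < T) {j : ℕ} (hj : 1 ≤ j) : 0 ≤ tmesh T r N j := by
  unfold tmesh
  have hj' : (1:ℝ) ≤ j := Nat.one_le_cast.mpr hj
  have h1 : (0:ℝ) ≤ ((j:ℝ) - 1) / N := by
    apply div_nonneg (by linarith) (Nat.cast_nonneg N)
  positivity

lemma tmesh_le_T (hT : 0 < T) (hr : 1 ≤ r) (hN : 0 < N) {j : ℕ} (hj1 : 1 ≤ j) (hj : j ≤ N + 1) :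
    tmesh T r N j ≤ T := by
  unfold tmesh
  have hNpos : (0:ℝ) < N := Nat.cast_pos.mpr hN
  have hj' : (j:ℝ) ≤ N + 1 := by exact_mod_cast Nat.cast_le.mpr hj
  have hx0 : (0:ℝ) ≤ ((j:ℝ) - 1) / N := by
    have : (1:ℝ) ≤ j := Nat.one_le_cast.mpr hj1
    apply div_nonneg (by linarith) hNpos.le
  have hx1 : ((j:ℝ) - 1) / N ≤ 1 := by
    rw [div_le_one hNpos]; linarith
  nlinarith [Real.rpow_le_one hx0 hx1 (by linarith : (0:ℝ) ≤ r)]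

lemma tau_pos (hT : 0 < T) (hr : 1 ≤ r) (hN : 0 < N) {j : ℕ} (hj : 1 ≤ j) :
    0 < tau T r N j :=
  sub_pos.mpr (tmesh_lt hT hr hN hj (Nat.lt_succ_self j))

lemma That_nonneg (hα : α ∈ Set.Ioo (0:ℝ) 1) (hT : 0 < T) (hr : 1 ≤ r) (hN : 0 < N)
    {n j : ℕ} (hj : 1 ≤ j) (hjn : j + 1 ≤ n) : 0 ≤ That α T r N n j := by
  unfold That
  rw [if_neg (by omega)]
  apply div_nonneg
  · have h1 : 0 ≤ tmesh T r N n - tmesh T r N (j+1) :=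
      sub_nonneg.mpr (tmesh_le hT hr hN (by omega) hjn)
    have h2 : tmesh T r N n - tmesh T r N (j+1) ≤ tmesh T r N n - tmesh T r N j := by
      have := tmesh_lt hT hr hN hj (Nat.lt_succ_self j); linarith
    have := Real.rpow_le_rpow h1 h2 (by linarith [hα.2] : (0:ℝ) ≤ 1 - α)
    linarith
  · exact (mul_pos (tau_pos hT hr hN hj) (Real.Gamma_pos_of_pos (by linarith [hα.2]))).le

lemma That_mono (hα : α ∈ Set.Ioo (0:ℝ) 1) (hT : 0 < T) (hr : 1 ≤ r) (hN : 0 < N)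
    {n j : ℕ} (hj : 2 ≤ j) (hjn : j + 1 ≤ n) :
    That α T r N n (j - 1) ≤ That α T r N n j := by
  have hΓ : 0 < Real.Gamma (2 - α) := Real.Gamma_pos_of_pos (by linarith [hα.2])
  have hsub : j - 1 + 1 = j := by omega
  set X := tmesh T r N n - tmesh T r N (j+1) with hX
  set Y := tmesh T r N n - tmesh T r N j with hY
  set Z := tmesh T r N n - tmesh T r N (j-1) with hZ
  have hXY : X < Y := by
    have := tmesh_lt hT hr hN (by omega : 1 ≤ j) (Nat.lt_succ_self j)
    simp only [hX, hY]; linarith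
  have hYZ : Y < Z := by
    have := tmesh_lt hT hr hN (by omega : 1 ≤ j - 1) (by omega : j - 1 < j)
    simp only [hY, hZ]; linarith
  have hX0 : 0 ≤ X := sub_nonneg.mpr (tmesh_le hT hr hN (by omega) hjn)
  have hZ0 : (0:ℝ) ≤ Z := by linarith
  have hconc : ConcaveOn ℝ (Set.Ici 0) (fun x : ℝ => x ^ (1 - α)) :=
    Real.concaveOn_rpow (by linarith [hα.2]) (by linarith [hα.1])
  have hslope := hconc.slope_anti_adjacent (Set.mem_Ici.mpr hX0) (Set.mem_Ici.mpr hZ0) hXY hYZ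
  unfold That
  rw [if_neg (by omega), if_neg (by omega), hsub]
  have hτj : tau T r N j = Y - X := by
    simp only [hX, hY, tau]; ring
  have hτj1 : tau T r N (j-1) = Z - Y := by
    simp only [hY, hZ, tau, hsub]; ring
  rw [hτj, hτj1, div_mul_eq_div_div, div_mul_eq_div_div]
  gcongr

lemma That_last (hα : α ∈ Set.Ioo (0:ℝ) 1) (hT : 0 < T) (hr : 1 ≤ r) (hN : 0 < N)
    {n : ℕ} (hn : 2 ≤ n) :
    That α T r N n (n-1) = (tau T r N (n-1)) ^ (1-α) / (tau T r N (n-1) * Real.Gamma (2-α)) := by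
  unfold That
  rw [if_neg (by omega)]
  have hsub : n - 1 + 1 = n := by omega
  rw [hsub, sub_self, Real.zero_rpow (by linarith [hα.2] : (1:ℝ) - α ≠ 0), sub_zero]
  congr 2
  simp only [tau, hsub]

end Mesh

set_option maxHeartbeats 2000000 in
/-- `L²` stability of the fully discrete L1-NIPG scheme:
`‖u_h^n‖ ≤ τ_{n-1}^α Γ(2-α) (‖f^n‖ + T̂_{n,1}‖u_h^1‖ + Σ_{j=2}^{n-1}(T̂_{n,j} - T̂_{n,j-1})‖u_h^j‖)`. -/
theorem l1nipg_stability_step (α T r : ℝ) (hα : α ∈ Set.Ioo (0 : ℝ) 1) (hT : 0 < T)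
    (hr : 1 ≤ r) (N : ℕ) (hN : 0 < N) (ℓ : ℝ) (hℓ : 0 < ℓ) (M k : ℕ) (hM : 1 ≤ M)
    (hk : 1 ≤ k) (a a' b p : ℝ → ℝ)
    (ha : ∀ y ∈ Set.Icc 0 ℓ, HasDerivAt a (a' y) y)
    (ha' : ContinuousOn a' (Set.Icc 0 ℓ))
    (hapos : ∀ y ∈ Set.Icc 0 ℓ, 0 < a y)
    (hb : ContinuousOn b (Set.Icc 0 ℓ)) (hbnn : ∀ y ∈ Set.Icc 0 ℓ, 0 ≤ b y)
    (hp : ContinuousOn p (Set.Icc 0 T)) (hppos : ∀ t ∈ Set.Icc 0 T, 0 < p t)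
    (σ : ℕ → ℝ) (hσ : ∀ m, 0 ≤ σ m)
    (f : ℕ → ℝ → ℝ) (hf : ∀ n, ContinuousOn (f n) (Set.Icc 0 ℓ))
    (uh : ℕ → ℕ → Polynomial ℝ)
    (hdeg : ∀ n m, (uh n m).degree ≤ k)
    (hscheme : ∀ n, 2 ≤ n → n ≤ N + 1 →
      ∀ v : ℕ → Polynomial ℝ, (∀ m, (v m).degree ≤ k) →
        nipg ℓ M (fun y => p (tmesh T r N n) * a y)
            (fun y => p (tmesh T r N n) * b y + That α T r N n (n - 1)) σ (uh n) v =
          ∑ m ∈ Finset.Icc 1 M, ∫ y in node ℓ M m..node ℓ M (m + 1),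
            (f n y + That α T r N n 1 * (uh 1 m).eval y +
                ∑ j ∈ Finset.Icc 2 (n - 1),
                  (That α T r N n j - That α T r N n (j - 1)) * (uh j m).eval y) *
              (v m).eval y) :
    ∀ n, 2 ≤ n → n ≤ N + 1 →
      brokenL2 ℓ M (uh n) ≤
        tau T r N (n - 1) ^ α * Real.Gamma (2 - α) *
          (funL2 ℓ (f n) + That α T r N n 1 * brokenL2 ℓ M (uh 1) +
            ∑ j ∈ Finset.Icc 2 (n - 1),
              (That α T r N n j - That α T r N n (j - 1)) * brokenL2 ℓ M (uh j)) := by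
  intro n hn2 hnN
  obtain ⟨hα0, hα1⟩ := hα
  have hΓ : 0 < Real.Gamma (2 - α) := Real.Gamma_pos_of_pos (by linarith)
  have hMpos : (0:ℝ) < M := Nat.cast_pos.mpr hM
  have hstep : (0:ℝ) < ℓ / M := div_pos hℓ hMpos
  -- node facts
  have hnode : ∀ m : ℕ, node ℓ M m ≤ node ℓ M (m+1) := by
    intro m; unfold node; push_cast; nlinarith [hstep.le]
  have hnode0 : ∀ m : ℕ, 1 ≤ m → 0 ≤ node ℓ M m := by
    intro m hm; unfold node
    have : (1:ℝ) ≤ m := Nat.one_le_cast.mpr hm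
    nlinarith [hstep.le]
  have hnodeℓ : ∀ m : ℕ, m ≤ M + 1 → node ℓ M m ≤ ℓ := by
    intro m hm; unfold node
    have h1 : (m:ℝ) ≤ (M:ℝ) + 1 := by exact_mod_cast Nat.cast_le.mpr hm
    have h2 : ((m:ℝ)-1) * (ℓ/M) ≤ (M:ℝ) * (ℓ/M) := by nlinarith [hstep.le]
    have h3 : (M:ℝ) * (ℓ/M) = ℓ := by field_simp
    linarith
  have hsubset : ∀ m ∈ Finset.Icc 1 M,
      Set.Icc (node ℓ M m) (node ℓ M (m+1)) ⊆ Set.Icc 0 ℓ := by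
    intro m hm
    rw [Finset.mem_Icc] at hm
    exact Set.Icc_subset_Icc (hnode0 m hm.1) (hnodeℓ (m+1) (by omega))
  have hsubsetu : ∀ m ∈ Finset.Icc 1 M,
      Set.uIcc (node ℓ M m) (node ℓ M (m+1)) ⊆ Set.Icc 0 ℓ := by
    intro m hm
    rw [Set.uIcc_of_le (hnode m)]
    exact hsubset m hm
  -- continuity
  have hacont : ContinuousOn a (Set.Icc 0 ℓ) :=
    fun y hy => ((ha y hy).continuousAt).continuousWithinAt
  have htn : tmesh T r N n ∈ Set.Icc 0 T :=
    ⟨tmesh_nonneg hT (by omega), tmesh_le_T hT hr hN (by omega) hnN⟩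
  have hP : 0 < p (tmesh T r N n) := hppos _ htn
  -- abbreviations
  set Tn := That α T r N n (n-1) with hTnd
  have hTn_nonneg : 0 ≤ Tn := That_nonneg ⟨hα0, hα1⟩ hT hr hN (by omega) (by omega)
  set Q := ∑ m ∈ Finset.Icc 1 M, ∫ y in node ℓ M m..node ℓ M (m+1),
      ((uh n m).eval y)^2 with hQd
  have hQnn : 0 ≤ Q := Finset.sum_nonneg fun m _ =>
    intervalIntegral.integral_nonneg (hnode m) fun y _ => sq_nonneg _
  have hbrok : brokenL2 ℓ M (uh n) = Real.sqrt Q := rfl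
  -- the scheme with v = uh n
  have hsch := hscheme n hn2 hnN (uh n) (fun m => hdeg n m)
  -- self form of nipg
  have hself : nipg ℓ M (fun y => p (tmesh T r N n) * a y)
      (fun y => p (tmesh T r N n) * b y + Tn) σ (uh n) (uh n)
      = (∑ m ∈ Finset.Icc 1 M, ∫ y in node ℓ M m..node ℓ M (m+1),
          ((p (tmesh T r N n) * a y) *
              (Polynomial.derivative (uh n m)).eval y *
              (Polynomial.derivative (uh n m)).eval y +
            (p (tmesh T r N n) * b y + Tn) * (uh n m).eval y * (uh n m).eval y))
        + ∑ m ∈ Finset.Icc 1 (M+1), σ m * jump ℓ M (uh n) m * jump ℓ M (uh n) m := by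
    unfold nipg; ring
  -- penalty term nonneg
  have hS4 : 0 ≤ ∑ m ∈ Finset.Icc 1 (M+1), σ m * jump ℓ M (uh n) m * jump ℓ M (uh n) m :=
    Finset.sum_nonneg fun m _ => by
      rw [mul_assoc]; exact mul_nonneg (hσ m) (mul_self_nonneg _)
  -- energy lower bound : Tn * Q ≤ volume term
  have hB : Tn * Q ≤ ∑ m ∈ Finset.Icc 1 M, ∫ y in node ℓ M m..node ℓ M (m+1),
      ((p (tmesh T r N n) * a y) *
          (Polynomial.derivative (uh n m)).eval y *
          (Polynomial.derivative (uh n m)).eval y +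
        (p (tmesh T r N n) * b y + Tn) * (uh n m).eval y * (uh n m).eval y) := by
    rw [hQd, Finset.mul_sum]
    apply Finset.sum_le_sum
    intro m hm
    rw [← intervalIntegral.integral_const_mul]
    have hint1 : IntervalIntegrable (fun y => Tn * ((uh n m).eval y)^2)
        MeasureTheory.volume (node ℓ M m) (node ℓ M (m+1)) :=
      ((continuous_const.mul ((Polynomial.continuous _).pow 2)).intervalIntegrable _ _)
    have hint2 : IntervalIntegrable (fun y =>
        (p (tmesh T r N n) * a y) *
          (Polynomial.derivative (uh n m)).eval y *
          (Polynomial.derivative (uh n m)).eval y +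
        (p (tmesh T r N n) * b y + Tn) * (uh n m).eval y * (uh n m).eval y)
        MeasureTheory.volume (node ℓ M m) (node ℓ M (m+1)) := by
      apply ContinuousOn.intervalIntegrable
      apply ContinuousOn.add
      · exact ((continuousOn_const.mul (hacont.mono (hsubsetu m hm))).mul
          (Polynomial.continuous _).continuousOn).mul (Polynomial.continuous _).continuousOn
      · exact (((continuousOn_const.mul (hb.mono (hsubsetu m hm))).add
          continuousOn_const).mul (Polynomial.continuous _).continuousOn).mul
          (Polynomial.continuous _).continuousOn
    apply intervalIntegral.integral_mono_on (hnode m) hint1 hint2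
    intro y hy
    have hy' : y ∈ Set.Icc 0 ℓ := hsubset m hm hy
    have h1 : 0 ≤ p (tmesh T r N n) * a y := mul_nonneg hP.le (hapos y hy').le
    have h2 : 0 ≤ p (tmesh T r N n) * b y := mul_nonneg hP.le (hbnn y hy')
    nlinarith [mul_self_nonneg ((Polynomial.derivative (uh n m)).eval y),
      mul_self_nonneg ((uh n m).eval y),
      mul_nonneg h1 (mul_self_nonneg ((Polynomial.derivative (uh n m)).eval y)),
      mul_nonneg h2 (mul_self_nonneg ((uh n m).eval y))]
  -- nonnegativity of the coefficients
  have hc1 : 0 ≤ That α T r N n 1 := That_nonneg ⟨hα0, hα1⟩ hT hr hN le_rfl hn2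
  have hΔ : ∀ j ∈ Finset.Icc 2 (n-1), 0 ≤ That α T r N n j - That α T r N n (j-1) := by
    intro j hj
    rw [Finset.mem_Icc] at hj
    exact sub_nonneg.mpr (That_mono ⟨hα0, hα1⟩ hT hr hN hj.1 (by omega))
  -- generic Cauchy-Schwarz pairing bound
  have pair_bound : ∀ g : ℕ → ℝ → ℝ,
      (∀ m ∈ Finset.Icc 1 M,
        ContinuousOn (g m) (Set.Icc (node ℓ M m) (node ℓ M (m+1)))) →
      ∑ m ∈ Finset.Icc 1 M,
          (∫ y in node ℓ M m..node ℓ M (m+1), g m y * (uh n m).eval y)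
        ≤ Real.sqrt (∑ m ∈ Finset.Icc 1 M,
              ∫ y in node ℓ M m..node ℓ M (m+1), (g m y)^2) * Real.sqrt Q := by
    intro g hg
    calc ∑ m ∈ Finset.Icc 1 M,
        (∫ y in node ℓ M m..node ℓ M (m+1), g m y * (uh n m).eval y)
        ≤ ∑ m ∈ Finset.Icc 1 M,
            Real.sqrt (∫ y in node ℓ M m..node ℓ M (m+1), (g m y)^2) *
            Real.sqrt (∫ y in node ℓ M m..node ℓ M (m+1), ((uh n m).eval y)^2) :=
          Finset.sum_le_sum fun m hm => my_cs_int (hnode m) (hg m hm)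
            (Polynomial.continuous _).continuousOn
      _ ≤ _ := by
          rw [hQd]
          exact my_sum_cs _ _ _
            (fun m _ => intervalIntegral.integral_nonneg (hnode m) fun _ _ => sq_nonneg _)
            (fun m _ => intervalIntegral.integral_nonneg (hnode m) fun _ _ => sq_nonneg _)
  -- splitting the right-hand side
  have hsplit : ∀ m ∈ Finset.Icc 1 M,
      (∫ y in node ℓ M m..node ℓ M (m+1),
        (f n y + That α T r N n 1 * (uh 1 m).eval y +
          ∑ j ∈ Finset.Icc 2 (n-1),
            (That α T r N n j - That α T r N n (j-1)) * (uh j m).eval y) *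
          (uh n m).eval y)
      = (∫ y in node ℓ M m..node ℓ M (m+1), f n y * (uh n m).eval y)
        + That α T r N n 1 *
            (∫ y in node ℓ M m..node ℓ M (m+1), (uh 1 m).eval y * (uh n m).eval y)
        + ∑ j ∈ Finset.Icc 2 (n-1), (That α T r N n j - That α T r N n (j-1)) *
            (∫ y in node ℓ M m..node ℓ M (m+1), (uh j m).eval y * (uh n m).eval y) := by
    intro m hm
    have hfc : ContinuousOn (fun y => f n y * (uh n m).eval y)
        (Set.uIcc (node ℓ M m) (node ℓ M (m+1))) :=
      ((hf n).mono (hsubsetu m hm)).mul (Polynomial.continuous _).continuousOn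
    have hint1 : IntervalIntegrable (fun y => f n y * (uh n m).eval y)
        MeasureTheory.volume (node ℓ M m) (node ℓ M (m+1)) := hfc.intervalIntegrable
    have hint2 : IntervalIntegrable
        (fun y => That α T r N n 1 * ((uh 1 m).eval y * (uh n m).eval y))
        MeasureTheory.volume (node ℓ M m) (node ℓ M (m+1)) :=
      ((continuous_const.mul ((Polynomial.continuous _).mul
        (Polynomial.continuous _))).intervalIntegrable _ _)
    have hint3 : ∀ j ∈ Finset.Icc 2 (n-1), IntervalIntegrable
        (fun y => (That α T r N n j - That α T r N n (j-1)) *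
          ((uh j m).eval y * (uh n m).eval y))
        MeasureTheory.volume (node ℓ M m) (node ℓ M (m+1)) :=
      fun j _ => ((continuous_const.mul ((Polynomial.continuous _).mul
        (Polynomial.continuous _))).intervalIntegrable _ _)
    have hint3' : IntervalIntegrable
        (fun y => ∑ j ∈ Finset.Icc 2 (n-1),
          (That α T r N n j - That α T r N n (j-1)) *
            ((uh j m).eval y * (uh n m).eval y))
        MeasureTheory.volume (node ℓ M m) (node ℓ M (m+1)) := by
      have hs := IntervalIntegrable.sum (μ := MeasureTheory.volume) (Finset.Icc 2 (n-1)) hint3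
      rwa [Finset.sum_fn] at hs
    have hcongr : ∀ y ∈ Set.uIcc (node ℓ M m) (node ℓ M (m+1)),
        (f n y + That α T r N n 1 * (uh 1 m).eval y +
          ∑ j ∈ Finset.Icc 2 (n-1),
            (That α T r N n j - That α T r N n (j-1)) * (uh j m).eval y) *
          (uh n m).eval y
        = f n y * (uh n m).eval y +
            That α T r N n 1 * ((uh 1 m).eval y * (uh n m).eval y) +
            ∑ j ∈ Finset.Icc 2 (n-1),
              (That α T r N n j - That α T r N n (j-1)) *
                ((uh j m).eval y * (uh n m).eval y) := by
      intro y _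
      rw [add_mul, add_mul, Finset.sum_mul]
      congr 1
      · ring
      · exact Finset.sum_congr rfl fun j _ => by ring
    rw [intervalIntegral.integral_congr hcongr,
      intervalIntegral.integral_add (hint1.add hint2) hint3',
      intervalIntegral.integral_add hint1 hint2,
      intervalIntegral.integral_const_mul,
      intervalIntegral.integral_finset_sum hint3]
    congr 1
    exact Finset.sum_congr rfl fun j _ => (intervalIntegral.integral_const_mul _ _)
  -- bound on the three parts
  have hfun2 : ∑ m ∈ Finset.Icc 1 M,
      ∫ y in node ℓ M m..node ℓ M (m+1), (f n y)^2 = ∫ y in (0:ℝ)..ℓ, (f n y)^2 := by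
    have h01 : node ℓ M 1 = 0 := by simp [node]
    have hM1 : node ℓ M (M+1) = ℓ := by
      unfold node; push_cast; field_simp; ring
    rw [← Finset.Ico_add_one_right_eq_Icc]
    rw [intervalIntegral.sum_integral_adjacent_intervals_Ico (f := fun y => (f n y)^2) (by omega : 1 ≤ M+1)
      (fun m hm => ((((hf n).mono (hsubsetu m (by
          rw [Finset.mem_Icc]; rw [Set.mem_Ico] at hm; omega))).pow 2).intervalIntegrable)),
      h01, hM1]
  have hbound1 : ∑ m ∈ Finset.Icc 1 M,
      (∫ y in node ℓ M m..node ℓ M (m+1), f n y * (uh n m).eval y)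
      ≤ funL2 ℓ (f n) * Real.sqrt Q := by
    have := pair_bound (fun _ y => f n y)
      (fun m hm => (hf n).mono (hsubset m hm))
    rw [hfun2] at this
    exact this
  have hbound2 : ∀ j : ℕ, ∑ m ∈ Finset.Icc 1 M,
      (∫ y in node ℓ M m..node ℓ M (m+1), (uh j m).eval y * (uh n m).eval y)
      ≤ brokenL2 ℓ M (uh j) * Real.sqrt Q := by
    intro j
    exact pair_bound (fun m y => (uh j m).eval y)
      (fun m _ => (Polynomial.continuous _).continuousOn)
  -- assemble the RHS bound
  set C := funL2 ℓ (f n) + That α T r N n 1 * brokenL2 ℓ M (uh 1) +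
      ∑ j ∈ Finset.Icc 2 (n-1),
        (That α T r N n j - That α T r N n (j-1)) * brokenL2 ℓ M (uh j) with hCd
  have hCnn : 0 ≤ C := by
    rw [hCd]
    have h1 : 0 ≤ funL2 ℓ (f n) := Real.sqrt_nonneg _
    have h2 : 0 ≤ brokenL2 ℓ M (uh 1) := Real.sqrt_nonneg _
    have h3 : 0 ≤ ∑ j ∈ Finset.Icc 2 (n-1),
        (That α T r N n j - That α T r N n (j-1)) * brokenL2 ℓ M (uh j) :=
      Finset.sum_nonneg fun j hj => mul_nonneg (hΔ j hj) (Real.sqrt_nonneg _)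
    nlinarith [mul_nonneg hc1 h2]
  have hRHS : (∑ m ∈ Finset.Icc 1 M, ∫ y in node ℓ M m..node ℓ M (m+1),
        (f n y + That α T r N n 1 * (uh 1 m).eval y +
          ∑ j ∈ Finset.Icc 2 (n-1),
            (That α T r N n j - That α T r N n (j-1)) * (uh j m).eval y) *
          (uh n m).eval y)
      ≤ C * Real.sqrt Q := by
    rw [Finset.sum_congr rfl hsplit, Finset.sum_add_distrib, Finset.sum_add_distrib,
      ← Finset.mul_sum]
    rw [Finset.sum_comm]
    have hterm3 : ∑ j ∈ Finset.Icc 2 (n-1), ∑ m ∈ Finset.Icc 1 M,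
        (That α T r N n j - That α T r N n (j-1)) *
          (∫ y in node ℓ M m..node ℓ M (m+1), (uh j m).eval y * (uh n m).eval y)
        ≤ ∑ j ∈ Finset.Icc 2 (n-1),
            (That α T r N n j - That α T r N n (j-1)) *
              (brokenL2 ℓ M (uh j) * Real.sqrt Q) := by
      apply Finset.sum_le_sum
      intro j hj
      rw [← Finset.mul_sum]
      exact mul_le_mul_of_nonneg_left (hbound2 j) (hΔ j hj)
    have hterm2 : That α T r N n 1 * (∑ m ∈ Finset.Icc 1 M,
        ∫ y in node ℓ M m..node ℓ M (m+1), (uh 1 m).eval y * (uh n m).eval y)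
        ≤ That α T r N n 1 * (brokenL2 ℓ M (uh 1) * Real.sqrt Q) :=
      mul_le_mul_of_nonneg_left (hbound2 1) hc1
    have hsum : C * Real.sqrt Q = funL2 ℓ (f n) * Real.sqrt Q +
        That α T r N n 1 * (brokenL2 ℓ M (uh 1) * Real.sqrt Q) +
        ∑ j ∈ Finset.Icc 2 (n-1),
          (That α T r N n j - That α T r N n (j-1)) *
            (brokenL2 ℓ M (uh j) * Real.sqrt Q) := by
      rw [hCd, add_mul, add_mul, Finset.sum_mul]
      congr 1
      · ring
      · exact Finset.sum_congr rfl fun j _ => by ring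
    rw [hsum]
    exact add_le_add (add_le_add hbound1 hterm2) hterm3
  -- combine
  have chain : Tn * Q ≤ C * Real.sqrt Q := by
    calc Tn * Q ≤ _ := hB
      _ ≤ _ + ∑ m ∈ Finset.Icc 1 (M+1),
          σ m * jump ℓ M (uh n) m * jump ℓ M (uh n) m := le_add_of_nonneg_right hS4
      _ = nipg ℓ M (fun y => p (tmesh T r N n) * a y)
          (fun y => p (tmesh T r N n) * b y + Tn) σ (uh n) (uh n) := hself.symm
      _ = _ := hsch
      _ ≤ C * Real.sqrt Q := hRHS
  -- final arithmetic
  set τ := tau T r N (n-1) with hτd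
  have hτ : 0 < τ := tau_pos hT hr hN (by omega)
  have hTn_eq : Tn = τ ^ (1-α) / (τ * Real.Gamma (2-α)) :=
    That_last ⟨hα0, hα1⟩ hT hr hN hn2
  have hττ : τ ^ α * τ ^ (1-α) = τ := by
    rw [← Real.rpow_add hτ]; norm_num
  have hfact : τ ^ α * Real.Gamma (2-α) * Tn = 1 := by
    rw [hTn_eq]
    have h1 : τ ^ α * Real.Gamma (2-α) * (τ^(1-α)/(τ*Real.Gamma (2-α)))
        = (τ^α * τ^(1-α)) * (Real.Gamma (2-α)/(τ*Real.Gamma (2-α))) := by ring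
    rw [h1, hττ]
    field_simp
  have hQle : Q ≤ (τ ^ α * Real.Gamma (2-α) * C) * Real.sqrt Q := by
    have hmul := mul_le_mul_of_nonneg_left chain
      (by positivity : (0:ℝ) ≤ τ ^ α * Real.Gamma (2-α))
    calc Q = (τ ^ α * Real.Gamma (2-α) * Tn) * Q := by rw [hfact]; ring
      _ = τ ^ α * Real.Gamma (2-α) * (Tn * Q) := by ring
      _ ≤ τ ^ α * Real.Gamma (2-α) * (C * Real.sqrt Q) := hmul
      _ = _ := by ring
  rw [hbrok]
  show Real.sqrt Q ≤ τ ^ α * Real.Gamma (2-α) * C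
  rcases eq_or_lt_of_le (Real.sqrt_nonneg Q) with h0 | h0
  · rw [← h0]
    positivity
  · have hsq : Real.sqrt Q * Real.sqrt Q ≤ (τ ^ α * Real.Gamma (2-α) * C) * Real.sqrt Q := by
      rw [Real.mul_self_sqrt hQnn]; exact hQle
    exact le_of_mul_le_mul_right hsq h0
end

section
/- Let a ∈ C¹([0,ℓ]) with a > 0, b ∈ C([0,ℓ]) with b ≥ 0, and p ∈ C([0,T]) with p > 0. For 2 ≤ n ≤ N+1 set K^n(y) = p(t_n) a(y) and c^n(y) = p(t_n) b(y) + T̂_{n,n−1}, and let f^n ∈ C([0,ℓ]). Suppose broken polynomials u_h^1, …, u_h^{N+1} of degree k satisfy, for each n with 2 ≤ n ≤ N+1, the fully discrete L1-NIPG scheme B^n(u_h^n, v) = Σ_{m=1}^M ∫_{K_m} (f^n + T̂_{n,1} u_h^1 + Σ_{j=2}^{n−1} (T̂_{n,j} − T̂_{n,j−1}) u_h^j) v_m dy for all broken polynomials v of degree k, where B^n is the NIPG bilinear form with coefficients K^n, c^n. Then there is a constant C depending only on α and r (not on T, N, M, h, n or the data) such that for every n with 2 ≤ n ≤ N+1,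 ‖u_h^n‖_{L²(0,ℓ)} ≤ ‖u_h^1‖_{L²(0,ℓ)} + C T^α max_{2 ≤ j ≤ n} ‖f^j‖_{L²(0,ℓ)}. -/
open MeasureTheory intervalIntegral

/-- Cauchy–Schwarz for interval integrals of continuous functions. -/
lemma cs_interval {a b : ℝ} (hab : a ≤ b) {g u : ℝ → ℝ}
    (hg : ContinuousOn g (Set.Icc a b)) (hu : ContinuousOn u (Set.Icc a b)) :
    (∫ y in a..b, g y * u y) ≤
      Real.sqrt (∫ y in a..b, (g y) ^ 2) * Real.sqrt (∫ y in a..b, (u y) ^ 2) := by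
  set A := ∫ y in a..b, (g y) ^ 2 with hAdef
  set B := ∫ y in a..b, (u y) ^ 2 with hBdef
  set S := ∫ y in a..b, g y * u y with hSdef
  have hg2 : IntervalIntegrable (fun y => (g y) ^ 2) volume a b := by
    have : ContinuousOn (fun y => (g y) ^ 2) (Set.Icc a b) := (hg.mul hg).congr fun y _ => sq (g y)
    exact this.intervalIntegrable_of_Icc hab
  have hu2 : IntervalIntegrable (fun y => (u y) ^ 2) volume a b := by
    have : ContinuousOn (fun y => (u y) ^ 2) (Set.Icc a b) := (hu.mul hu).congr fun y _ => sq (u y)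
    exact this.intervalIntegrable_of_Icc hab
  have hgu : IntervalIntegrable (fun y => g y * u y) volume a b :=
    (hg.mul hu).intervalIntegrable_of_Icc hab
  have hA : 0 ≤ A := integral_nonneg hab fun _ _ => sq_nonneg _
  have hB : 0 ≤ B := integral_nonneg hab fun _ _ => sq_nonneg _
  have key : ∀ t : ℝ, 0 ≤ t ^ 2 * A - 2 * t * S + B := by
    intro t
    have h0 : 0 ≤ ∫ y in a..b, (t * g y - u y) ^ 2 :=
      integral_nonneg hab fun _ _ => sq_nonneg _
    have hrw : (∫ y in a..b, (t * g y - u y) ^ 2)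
        = t ^ 2 * A - 2 * t * S + B := by
      have hpt : ∀ y : ℝ, (t * g y - u y) ^ 2
          = t ^ 2 * (g y) ^ 2 - (2 * t) * (g y * u y) + (u y) ^ 2 := fun y => by ring
      calc (∫ y in a..b, (t * g y - u y) ^ 2)
          = ∫ y in a..b, (t ^ 2 * (g y) ^ 2 - (2 * t) * (g y * u y) + (u y) ^ 2) := by
            simp_rw [hpt]
        _ = (∫ y in a..b, (t ^ 2 * (g y) ^ 2 - (2 * t) * (g y * u y))) + B := by
            rw [integral_add ((hg2.const_mul _).sub (hgu.const_mul _)) hu2]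
        _ = (∫ y in a..b, t ^ 2 * (g y) ^ 2) - (∫ y in a..b, (2 * t) * (g y * u y)) + B := by
            rw [integral_sub (hg2.const_mul _) (hgu.const_mul _)]
        _ = t ^ 2 * A - 2 * t * S + B := by
            rw [intervalIntegral.integral_const_mul, intervalIntegral.integral_const_mul]
    linarith [hrw ▸ h0]
  rcases le_or_gt S 0 with hS | hS
  · exact hS.trans (by positivity)
  · have hApos : 0 < A := by
      rcases hA.lt_or_eq with h | h
      · exact h
      · exfalso
        have h1 := key ((B + 1) / (2 * S))
        rw [← h] at h1
        have h2 : 2 * ((B + 1) / (2 * S)) * S = B + 1 := by field_simp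
        nlinarith
    have h3 := key (S / A)
    have h4 : (S / A) ^ 2 * A = S ^ 2 / A := by field_simp
    have h5 : 2 * (S / A) * S = 2 * (S ^ 2 / A) := by ring
    have h6 : S ^ 2 ≤ A * B := by
      rw [h4, h5] at h3
      have h7 : S ^ 2 / A ≤ B := by linarith
      calc S ^ 2 = (S ^ 2 / A) * A := by field_simp
        _ ≤ B * A := mul_le_mul_of_nonneg_right h7 hA
        _ = A * B := mul_comm _ _
    calc S = Real.sqrt (S ^ 2) := (Real.sqrt_sq hS.le).symm
      _ ≤ Real.sqrt (A * B) := Real.sqrt_le_sqrt h6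
      _ = Real.sqrt A * Real.sqrt B := Real.sqrt_mul hA _

/-- Tangent-line inequality for the concave function `x ^ (1-α)`. -/
lemma tangent_rpow {α a b : ℝ} (hα0 : 0 < α) (hα1 : α < 1)
    (ha : 0 ≤ a) (hb : 0 < b) (hab : a ≤ b) :
    (1 - α) * b ^ (-α) * (b - a) ≤ b ^ (1 - α) - a ^ (1 - α) := by
  have hs : -1 ≤ a / b - 1 := by
    have : 0 ≤ a / b := div_nonneg ha hb.le
    linarith
  have hp1 : (0:ℝ) ≤ 1 - α := by linarith
  have hp2 : (1:ℝ) - α ≤ 1 := by linarith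
  have hbern := rpow_one_add_le_one_add_mul_self hs hp1 hp2
  rw [show (1 : ℝ) + (a / b - 1) = a / b by ring] at hbern
  have hdiv : (a / b) ^ (1 - α) = a ^ (1 - α) / b ^ (1 - α) := Real.div_rpow ha hb.le _
  rw [hdiv] at hbern
  have hbp : 0 < b ^ (1 - α) := Real.rpow_pos_of_pos hb _
  have hmul := mul_le_mul_of_nonneg_right hbern hbp.le
  rw [div_mul_cancel₀ _ hbp.ne'] at hmul
  have hba : b ^ (1 - α) * b⁻¹ = b ^ (-α) := by
    rw [← Real.rpow_neg_one b, ← Real.rpow_add hb]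
    norm_num
    rw [show (1:ℝ) - α + -1 = -α by ring]
  have hexp : (1 + (1 - α) * (a / b - 1)) * b ^ (1 - α)
      = b ^ (1 - α) - (1 - α) * (b ^ (1 - α) * b⁻¹) * (b - a) := by
    field_simp
    ring
  rw [hexp, hba] at hmul
  linarith

/-- Telescoping sum over `Icc 2 n`. -/
lemma telescope_Icc (g : ℕ → ℝ) : ∀ n : ℕ, 1 ≤ n →
    (∑ j ∈ Finset.Icc 2 n, (g j - g (j - 1))) = g n - g 1 := by
  intro n hn
  induction n with
  | zero => omega
  | succ m ih =>
    rcases Nat.eq_or_lt_of_le hn with h | h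
    · simp [← h]
    · have hm : 1 ≤ m := by omega
      rw [Finset.sum_Icc_succ_top (by omega : 2 ≤ m + 1), ih hm]
      simp only [Nat.add_sub_cancel]
      ring

/-- Splitting a piecewise right-hand-side integral. -/
lemma piece_split {am bm : ℝ} (hab : am ≤ bm) (φ e1 u : ℝ → ℝ) (c1 : ℝ) (s : Finset ℕ)
    (cj : ℕ → ℝ) (ej : ℕ → ℝ → ℝ)
    (hφ : ContinuousOn φ (Set.Icc am bm)) (he1 : Continuous e1) (hu : Continuous u)
    (hej : ∀ j, Continuous (ej j)) :
    (∫ y in am..bm, (φ y + c1 * e1 y + ∑ j ∈ s, cj j * ej j y) * u y)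
      = (∫ y in am..bm, φ y * u y) + c1 * (∫ y in am..bm, e1 y * u y)
        + ∑ j ∈ s, cj j * ∫ y in am..bm, ej j y * u y := by
  have hui : IntervalIntegrable (fun y => φ y * u y) volume am bm :=
    (hφ.mul hu.continuousOn).intervalIntegrable_of_Icc hab
  have h2 : IntervalIntegrable (fun y => c1 * (e1 y * u y)) volume am bm :=
    (continuous_const.mul (he1.mul hu)).intervalIntegrable _ _
  have h3 : ∀ j ∈ s, IntervalIntegrable (fun y => cj j * (ej j y * u y)) volume am bm :=
    fun j _ => (continuous_const.mul ((hej j).mul hu)).intervalIntegrable _ _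
  have h4 : IntervalIntegrable (fun y => ∑ j ∈ s, cj j * (ej j y * u y)) volume am bm :=
    (continuous_finset_sum s fun j _ => continuous_const.mul ((hej j).mul hu)).intervalIntegrable _ _
  calc (∫ y in am..bm, (φ y + c1 * e1 y + ∑ j ∈ s, cj j * ej j y) * u y)
      = ∫ y in am..bm,
          (φ y * u y + (c1 * (e1 y * u y) + ∑ j ∈ s, cj j * (ej j y * u y))) := by
        apply intervalIntegral.integral_congr
        intro y _
        simp only
        have hpt : ∀ j ∈ s, (cj j * ej j y) * u y = cj j * (ej j y * u y) :=
          fun j _ => mul_assoc _ _ _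
        rw [add_mul, add_mul, Finset.sum_mul, Finset.sum_congr rfl hpt]
        ring
    _ = (∫ y in am..bm, φ y * u y)
        + ∫ y in am..bm, (c1 * (e1 y * u y) + ∑ j ∈ s, cj j * (ej j y * u y)) :=
        intervalIntegral.integral_add hui (h2.add h4)
    _ = (∫ y in am..bm, φ y * u y) + ((∫ y in am..bm, c1 * (e1 y * u y))
        + ∫ y in am..bm, (∑ j ∈ s, cj j * (ej j y * u y))) := by
        rw [intervalIntegral.integral_add h2 h4]
    _ = (∫ y in am..bm, φ y * u y) + c1 * (∫ y in am..bm, e1 y * u y)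
        + ∑ j ∈ s, cj j * ∫ y in am..bm, ej j y * u y := by
        rw [intervalIntegral.integral_const_mul, intervalIntegral.integral_finset_sum h3]
        have : ∀ j ∈ s, (∫ y in am..bm, cj j * (ej j y * u y))
            = cj j * ∫ y in am..bm, ej j y * u y :=
          fun j _ => intervalIntegral.integral_const_mul _ _
        rw [Finset.sum_congr rfl this]
        ring

/-- Per-piece coercivity. -/
lemma piece_coercive {am bm : ℝ} (hab : am ≤ bm) (K bb : ℝ → ℝ) (c0 : ℝ)
    (hK : ContinuousOn K (Set.Icc am bm)) (hKnn : ∀ y ∈ Set.Icc am bm, 0 ≤ K y)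
    (hbb : ContinuousOn bb (Set.Icc am bm)) (hbnn : ∀ y ∈ Set.Icc am bm, 0 ≤ bb y)
    (q dq : ℝ → ℝ) (hq : Continuous q) (hdq : Continuous dq) :
    c0 * (∫ y in am..bm, (q y) ^ 2) ≤
      ∫ y in am..bm, (K y * dq y * dq y + (bb y + c0) * q y * q y) := by
  have hint1 : IntervalIntegrable (fun y => K y * dq y * dq y + bb y * q y * q y)
      volume am bm :=
    (((hK.mul hdq.continuousOn).mul hdq.continuousOn).add
      ((hbb.mul hq.continuousOn).mul hq.continuousOn)).intervalIntegrable_of_Icc hab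
  have hint2 : IntervalIntegrable (fun y => c0 * (q y) ^ 2) volume am bm :=
    (continuous_const.mul (hq.pow 2)).intervalIntegrable _ _
  have h1 : (∫ y in am..bm, (K y * dq y * dq y + (bb y + c0) * q y * q y))
      = (∫ y in am..bm, (K y * dq y * dq y + bb y * q y * q y))
        + c0 * ∫ y in am..bm, (q y) ^ 2 := by
    rw [← intervalIntegral.integral_const_mul, ← intervalIntegral.integral_add hint1 hint2]
    apply intervalIntegral.integral_congr
    intro y _
    simp only
    ring
  have h2 : 0 ≤ ∫ y in am..bm, (K y * dq y * dq y + bb y * q y * q y) :=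
    intervalIntegral.integral_nonneg hab fun y hy => by
      nlinarith [hKnn y hy, hbnn y hy, mul_self_nonneg (dq y), mul_self_nonneg (q y)]
  linarith

/-- Cauchy–Schwarz over the broken mesh. -/
lemma broken_cs {ℓ : ℝ} {M : ℕ} (hh : ∀ m : ℕ, node ℓ M m ≤ node ℓ M (m + 1))
    (g u : ℕ → ℝ → ℝ)
    (hg : ∀ m ∈ Finset.Icc 1 M, ContinuousOn (g m) (Set.Icc (node ℓ M m) (node ℓ M (m + 1))))
    (hu : ∀ m ∈ Finset.Icc 1 M, ContinuousOn (u m) (Set.Icc (node ℓ M m) (node ℓ M (m + 1)))) :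
    (∑ m ∈ Finset.Icc 1 M, ∫ y in node ℓ M m..node ℓ M (m + 1), g m y * u m y)
      ≤ Real.sqrt (∑ m ∈ Finset.Icc 1 M,
            ∫ y in node ℓ M m..node ℓ M (m + 1), (g m y) ^ 2)
        * Real.sqrt (∑ m ∈ Finset.Icc 1 M,
            ∫ y in node ℓ M m..node ℓ M (m + 1), (u m y) ^ 2) := by
  calc (∑ m ∈ Finset.Icc 1 M, ∫ y in node ℓ M m..node ℓ M (m + 1), g m y * u m y)
      ≤ ∑ m ∈ Finset.Icc 1 M,
          Real.sqrt (∫ y in node ℓ M m..node ℓ M (m + 1), (g m y) ^ 2)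
          * Real.sqrt (∫ y in node ℓ M m..node ℓ M (m + 1), (u m y) ^ 2) :=
        Finset.sum_le_sum fun m hm => cs_interval (hh m) (hg m hm) (hu m hm)
    _ ≤ _ := Real.sum_sqrt_mul_sqrt_le _
        (fun m => intervalIntegral.integral_nonneg (hh m) fun _ _ => sq_nonneg _)
        (fun m => intervalIntegral.integral_nonneg (hh m) fun _ _ => sq_nonneg _)

/-- `nipg` evaluated on the diagonal. -/
lemma nipg_self (ℓ : ℝ) (M : ℕ) (K c : ℝ → ℝ) (σ : ℕ → ℝ) (u : ℕ → Polynomial ℝ) :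
    nipg ℓ M K c σ u u =
      (∑ m ∈ Finset.Icc 1 M, ∫ y in node ℓ M m..node ℓ M (m + 1),
        (K y * (Polynomial.derivative (u m)).eval y * (Polynomial.derivative (u m)).eval y +
          c y * (u m).eval y * (u m).eval y))
      + ∑ m ∈ Finset.Icc 1 (M + 1), σ m * jump ℓ M u m * jump ℓ M u m := by
  unfold nipg
  ring

set_option maxHeartbeats 1000000 in
/-- global `L²` stability of the fully discrete L1-NIPG scheme:
there is `C = C(α,r)` with `‖u_h^n‖ ≤ ‖u_h^1‖ + C T^α max_{2≤j≤n} ‖f^j‖`. -/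
theorem l1nipg_stability (α r : ℝ) (hα : α ∈ Set.Ioo (0 : ℝ) 1) (hr : 1 ≤ r) :
    ∃ C : ℝ, 0 < C ∧
      ∀ T : ℝ, 0 < T → ∀ N : ℕ, 0 < N → ∀ ℓ : ℝ, 0 < ℓ →
      ∀ M k : ℕ, 1 ≤ M → 1 ≤ k →
      ∀ a a' b p : ℝ → ℝ,
        (∀ y ∈ Set.Icc 0 ℓ, HasDerivAt a (a' y) y) →
        ContinuousOn a' (Set.Icc 0 ℓ) →
        (∀ y ∈ Set.Icc 0 ℓ, 0 < a y) →
        ContinuousOn b (Set.Icc 0 ℓ) → (∀ y ∈ Set.Icc 0 ℓ, 0 ≤ b y) →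
        ContinuousOn p (Set.Icc 0 T) → (∀ t ∈ Set.Icc 0 T, 0 < p t) →
      ∀ σ : ℕ → ℝ, (∀ m, 0 ≤ σ m) →
      ∀ f : ℕ → ℝ → ℝ, (∀ n, ContinuousOn (f n) (Set.Icc 0 ℓ)) →
      ∀ uh : ℕ → ℕ → Polynomial ℝ, (∀ n m, (uh n m).degree ≤ k) →
        (∀ n, 2 ≤ n → n ≤ N + 1 →
          ∀ v : ℕ → Polynomial ℝ, (∀ m, (v m).degree ≤ k) →
            nipg ℓ M (fun y => p (tmesh T r N n) * a y)
                (fun y => p (tmesh T r N n) * b y + That α T r N n (n - 1)) σ (uh n) v =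
              ∑ m ∈ Finset.Icc 1 M, ∫ y in node ℓ M m..node ℓ M (m + 1),
                (f n y + That α T r N n 1 * (uh 1 m).eval y +
                    ∑ j ∈ Finset.Icc 2 (n - 1),
                      (That α T r N n j - That α T r N n (j - 1)) * (uh j m).eval y) *
                  (v m).eval y) →
        ∀ n : ℕ, ∀ hn2 : 2 ≤ n, n ≤ N + 1 →
          brokenL2 ℓ M (uh n) ≤
            brokenL2 ℓ M (uh 1) +
              C * T ^ α *
                (Finset.Icc 2 n).sup' (Finset.nonempty_Icc.mpr hn2)
                  (fun j => funL2 ℓ (f j)) := by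
  obtain ⟨hα0, hα1⟩ := hα
  have h2α : (0:ℝ) < 2 - α := by linarith
  have h1α : (0:ℝ) < 1 - α := by linarith
  have hΓ : 0 < Real.Gamma (2 - α) := Real.Gamma_pos_of_pos h2α
  refine ⟨Real.Gamma (2 - α) / (1 - α), div_pos hΓ h1α, ?_⟩
  intro T hT N hN ℓ hℓ M k hM hk a a' b p haderiv ha'c hapos hbc hbnn hpc hppos
    σ hσ f hfc uh hdeg hscheme
  set C := Real.Gamma (2 - α) / (1 - α) with hCdef
  have hCpos : 0 < C := div_pos hΓ h1α
  have hr0 : (0:ℝ) < r := lt_of_lt_of_le one_pos hr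
  have hNpos : (0:ℝ) < (N:ℝ) := by exact_mod_cast hN
  -- mesh facts
  have htmono : ∀ i j : ℕ, 1 ≤ i → i < j → tmesh T r N i < tmesh T r N j := by
    intro i j hi hij
    unfold tmesh
    have hi1 : (1:ℝ) ≤ (i:ℝ) := by exact_mod_cast hi
    have hij1 : (i:ℝ) < (j:ℝ) := by exact_mod_cast hij
    have hbase : (0:ℝ) ≤ ((i:ℝ)-1)/(N:ℝ) := div_nonneg (by linarith) hNpos.le
    have hlt : ((i:ℝ)-1)/(N:ℝ) < ((j:ℝ)-1)/(N:ℝ) :=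
      (div_lt_div_iff_of_pos_right hNpos).mpr (by linarith)
    exact mul_lt_mul_of_pos_left (Real.rpow_lt_rpow hbase hlt hr0) hT
  have htmono' : ∀ i j : ℕ, 1 ≤ i → i ≤ j → tmesh T r N i ≤ tmesh T r N j := by
    intro i j hi hij
    rcases eq_or_lt_of_le hij with h | h
    · rw [h]
    · exact (htmono i j hi h).le
  have ht1 : tmesh T r N 1 = 0 := by
    simp [tmesh, Real.zero_rpow hr0.ne']
  have htle : ∀ j : ℕ, 1 ≤ j → j ≤ N + 1 → tmesh T r N j ≤ T := by
    intro j hj hjN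
    unfold tmesh
    have hj1 : (1:ℝ) ≤ (j:ℝ) := by exact_mod_cast hj
    have hjN1 : (j:ℝ) ≤ (N:ℝ) + 1 := by exact_mod_cast hjN
    have h0 : (0:ℝ) ≤ ((j:ℝ)-1)/(N:ℝ) := div_nonneg (by linarith) hNpos.le
    have h1 : ((j:ℝ)-1)/(N:ℝ) ≤ 1 := by rw [div_le_one hNpos]; linarith
    nlinarith [Real.rpow_le_one h0 h1 hr0.le]
  -- node facts
  have hMR : (0:ℝ) < (M:ℝ) := by exact_mod_cast hM
  have hhpos : 0 < ℓ / (M:ℝ) := div_pos hℓ hMR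
  have hnode_succ : ∀ m : ℕ, node ℓ M m ≤ node ℓ M (m+1) := by
    intro m
    unfold node
    push_cast
    nlinarith [hhpos]
  have hnode1 : node ℓ M 1 = 0 := by simp [node]
  have hnodetop : node ℓ M (M+1) = ℓ := by
    unfold node
    push_cast
    field_simp
    ring
  have hsubI : ∀ m : ℕ, 1 ≤ m → m ≤ M →
      Set.Icc (node ℓ M m) (node ℓ M (m+1)) ⊆ Set.Icc 0 ℓ := by
    intro m h1 h2
    apply Set.Icc_subset_Icc
    · unfold node
      have hm1 : (1:ℝ) ≤ (m:ℝ) := by exact_mod_cast h1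
      nlinarith [hhpos]
    · have hm2 : (m:ℝ) ≤ (M:ℝ) := by exact_mod_cast h2
      have hMl : (M:ℝ) * (ℓ / (M:ℝ)) = ℓ := by field_simp
      unfold node
      push_cast
      nlinarith [mul_le_mul_of_nonneg_right hm2 hhpos.le, hMl]
  have hac : ContinuousOn a (Set.Icc 0 ℓ) :=
    fun y hy => ((haderiv y hy).continuousAt).continuousWithinAt
  -- That facts
  have hThat_eq : ∀ n j : ℕ, 1 ≤ j → That α T r N n j
      = ((tmesh T r N n - tmesh T r N j) ^ (1-α)
          - (tmesh T r N n - tmesh T r N (j+1)) ^ (1-α))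
        / (tmesh T r N (j+1) - tmesh T r N j) / Real.Gamma (2-α) := by
    intro n j hj
    rw [That, if_neg (by omega)]
    unfold tau
    rw [div_div]
  have hThatpos : ∀ n : ℕ, 2 ≤ n → 0 < That α T r N n (n-1) := by
    intro n hn
    have heq : n - 1 + 1 = n := by omega
    rw [hThat_eq n (n-1) (by omega), heq, sub_self,
      Real.zero_rpow h1α.ne', sub_zero]
    have hτ : 0 < tmesh T r N n - tmesh T r N (n-1) :=
      sub_pos.mpr (htmono (n-1) n (by omega) (by omega))
    exact div_pos (div_pos (Real.rpow_pos_of_pos hτ _) hτ) hΓ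
  have hΔnn : ∀ n j : ℕ, 2 ≤ j → j + 1 ≤ n →
      That α T r N n (j-1) ≤ That α T r N n j := by
    intro n j hj hjn
    have hj1 : 1 ≤ j - 1 := by omega
    have hx0 : (0:ℝ) ≤ tmesh T r N n - tmesh T r N (j+1) :=
      sub_nonneg.mpr (htmono' (j+1) n (by omega) hjn)
    have hxy : tmesh T r N n - tmesh T r N (j+1) < tmesh T r N n - tmesh T r N j := by
      have := htmono j (j+1) (by omega) (by omega); linarith
    have hyz : tmesh T r N n - tmesh T r N j < tmesh T r N n - tmesh T r N (j-1) := by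
      have := htmono (j-1) j hj1 (by omega); linarith
    have hz0 : (0:ℝ) ≤ tmesh T r N n - tmesh T r N (j-1) := by linarith
    have hslope := (Real.concaveOn_rpow h1α.le (by linarith)).slope_anti_adjacent
      (Set.mem_Ici.mpr hx0) (Set.mem_Ici.mpr hz0) hxy hyz
    have h1 : j - 1 + 1 = j := by omega
    rw [hThat_eq n (j-1) hj1, hThat_eq n j (by omega), h1]
    have e1 : tmesh T r N j - tmesh T r N (j-1)
        = (tmesh T r N n - tmesh T r N (j-1)) - (tmesh T r N n - tmesh T r N j) := by ring
    have e2 : tmesh T r N (j+1) - tmesh T r N j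
        = (tmesh T r N n - tmesh T r N j) - (tmesh T r N n - tmesh T r N (j+1)) := by ring
    rw [e1, e2]
    exact (div_le_div_iff_of_pos_right hΓ).mpr hslope
  have hThat1nn : ∀ n : ℕ, 2 ≤ n → 0 ≤ That α T r N n 1 := by
    intro n hn
    rw [hThat_eq n 1 le_rfl]
    have h2n : tmesh T r N (1+1) ≤ tmesh T r N n := htmono' 2 n (by omega) hn
    have h12 : tmesh T r N 1 < tmesh T r N (1+1) := htmono 1 2 le_rfl one_lt_two
    have hnum : (tmesh T r N n - tmesh T r N (1+1)) ^ (1-α)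
        ≤ (tmesh T r N n - tmesh T r N 1) ^ (1-α) :=
      Real.rpow_le_rpow (by linarith) (by linarith) h1α.le
    exact div_nonneg (div_nonneg (by linarith) (by linarith)) hΓ.le
  have hThat1CT : ∀ n : ℕ, 2 ≤ n → n ≤ N + 1 →
      1 ≤ That α T r N n 1 * (C * T ^ α) := by
    intro n hn hnN
    have htnpos : 0 < tmesh T r N n := by
      have := htmono 1 n le_rfl (by omega); linarith [ht1]
    have ht2pos : 0 < tmesh T r N 2 := by
      have := htmono 1 2 le_rfl one_lt_two; linarith [ht1]
    have h2n : tmesh T r N 2 ≤ tmesh T r N n := htmono' 2 n (by omega) hn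
    have hnT : tmesh T r N n ≤ T := htle n (by omega) hnN
    have htan := tangent_rpow hα0 hα1
      (a := tmesh T r N n - tmesh T r N 2) (b := tmesh T r N n)
      (by linarith) htnpos (by linarith)
    have hnum : (1-α) * tmesh T r N n ^ (-α) * tmesh T r N 2
        ≤ (tmesh T r N n) ^ (1-α) - (tmesh T r N n - tmesh T r N 2) ^ (1-α) := by
      rw [show tmesh T r N n - (tmesh T r N n - tmesh T r N 2) = tmesh T r N 2 by ring] at htan
      exact htan
    have hw : 0 < tmesh T r N n ^ (-α) := Real.rpow_pos_of_pos htnpos _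
    have hwT : T ^ (-α) ≤ tmesh T r N n ^ (-α) :=
      Real.rpow_le_rpow_of_nonpos htnpos hnT (by linarith)
    have hTa : 0 < T ^ α := Real.rpow_pos_of_pos hT _
    have hprod : T ^ (-α) * T ^ α = 1 := by
      rw [Real.rpow_neg hT.le]
      exact inv_mul_cancel₀ hTa.ne'
    have hTh1ge : (1-α) * tmesh T r N n ^ (-α) / Real.Gamma (2-α) ≤ That α T r N n 1 := by
      rw [hThat_eq n 1 le_rfl, show (1:ℕ)+1 = 2 from rfl, ht1, sub_zero, sub_zero, div_div]
      rw [div_le_div_iff₀ hΓ (by positivity)]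
      nlinarith [hnum, ht2pos, hΓ, hw]
    calc (1:ℝ) = T ^ (-α) * T ^ α := hprod.symm
      _ ≤ tmesh T r N n ^ (-α) * T ^ α := mul_le_mul_of_nonneg_right hwT hTa.le
      _ = ((1-α) * tmesh T r N n ^ (-α) / Real.Gamma (2-α)) * (C * T ^ α) := by
          rw [hCdef]
          field_simp
      _ ≤ That α T r N n 1 * (C * T ^ α) := by
          apply mul_le_mul_of_nonneg_right hTh1ge (by positivity)
  -- chain of integrals of squares
  have hchain : ∀ g : ℝ → ℝ, ContinuousOn g (Set.Icc 0 ℓ) →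
      (∑ m ∈ Finset.Icc 1 M, ∫ y in node ℓ M m..node ℓ M (m+1), (g y)^2)
        = ∫ y in (0:ℝ)..ℓ, (g y)^2 := by
    intro g hg
    rw [← Finset.Ico_add_one_right_eq_Icc]
    have hint : ∀ m ∈ Set.Ico 1 (M+1), IntervalIntegrable (fun y => (g y)^2)
        MeasureTheory.volume (node ℓ M m) (node ℓ M (m+1)) := by
      intro m hm
      obtain ⟨h1m, h2m⟩ := Set.mem_Ico.mp hm
      exact ((hg.pow 2).mono (hsubI m h1m (by omega))).intervalIntegrable_of_Icc
        (hnode_succ m)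
    rw [intervalIntegral.sum_integral_adjacent_intervals_Ico (by omega : 1 ≤ M + 1) hint]
    rw [hnode1, hnodetop]
  -- the key per-step inequality
  have key : ∀ n : ℕ, 2 ≤ n → n ≤ N + 1 →
      That α T r N n (n-1) * brokenL2 ℓ M (uh n) ≤
        funL2 ℓ (f n) + That α T r N n 1 * brokenL2 ℓ M (uh 1)
          + ∑ j ∈ Finset.Icc 2 (n-1),
              (That α T r N n j - That α T r N n (j-1)) * brokenL2 ℓ M (uh j) := by
    intro n hn2 hnN
    have htnpos : 0 < tmesh T r N n := by
      have := htmono 1 n le_rfl (by omega); linarith [ht1]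
    have hnT : tmesh T r N n ≤ T := htle n (by omega) hnN
    have hptn : 0 < p (tmesh T r N n) := hppos _ ⟨htnpos.le, hnT⟩
    have hs := hscheme n hn2 hnN (uh n) (hdeg n)
    have hXnn : 0 ≤ ∑ m ∈ Finset.Icc 1 M,
        ∫ y in node ℓ M m..node ℓ M (m+1), ((uh n m).eval y)^2 :=
      Finset.sum_nonneg fun m _ =>
        intervalIntegral.integral_nonneg (hnode_succ m) fun _ _ => sq_nonneg _
    have hSnX : brokenL2 ℓ M (uh n) * brokenL2 ℓ M (uh n)
        = ∑ m ∈ Finset.Icc 1 M,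
            ∫ y in node ℓ M m..node ℓ M (m+1), ((uh n m).eval y)^2 := by
      unfold brokenL2
      exact Real.mul_self_sqrt hXnn
    -- coercivity
    have hcoer : That α T r N n (n-1) * (∑ m ∈ Finset.Icc 1 M,
          ∫ y in node ℓ M m..node ℓ M (m+1), ((uh n m).eval y)^2)
        ≤ nipg ℓ M (fun y => p (tmesh T r N n) * a y)
            (fun y => p (tmesh T r N n) * b y + That α T r N n (n-1)) σ (uh n) (uh n) := by
      rw [nipg_self]
      have hP : 0 ≤ ∑ m ∈ Finset.Icc 1 (M+1),
          σ m * jump ℓ M (uh n) m * jump ℓ M (uh n) m :=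
        Finset.sum_nonneg fun m _ => by
          rw [mul_assoc]; exact mul_nonneg (hσ m) (mul_self_nonneg _)
      refine le_add_of_le_of_nonneg ?_ hP
      rw [Finset.mul_sum]
      refine Finset.sum_le_sum fun m hm => ?_
      obtain ⟨h1m, h2m⟩ := Finset.mem_Icc.mp hm
      exact piece_coercive (hnode_succ m)
        (fun y => p (tmesh T r N n) * a y) (fun y => p (tmesh T r N n) * b y) _
        (continuousOn_const.mul (hac.mono (hsubI m h1m h2m)))
        (fun y hy => mul_nonneg hptn.le (hapos y (hsubI m h1m h2m hy)).le)
        (continuousOn_const.mul (hbc.mono (hsubI m h1m h2m)))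
        (fun y hy => mul_nonneg hptn.le (hbnn y (hsubI m h1m h2m hy)))
        _ _ (Polynomial.continuous _) (Polynomial.continuous _)
    -- splitting the right-hand side
    have hsplitm : ∀ m ∈ Finset.Icc 1 M,
        (∫ y in node ℓ M m..node ℓ M (m+1),
          (f n y + That α T r N n 1 * (uh 1 m).eval y +
            ∑ j ∈ Finset.Icc 2 (n-1),
              (That α T r N n j - That α T r N n (j-1)) * (uh j m).eval y)
            * (uh n m).eval y)
        = (∫ y in node ℓ M m..node ℓ M (m+1), f n y * (uh n m).eval y)
          + That α T r N n 1 *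
              (∫ y in node ℓ M m..node ℓ M (m+1), (uh 1 m).eval y * (uh n m).eval y)
          + ∑ j ∈ Finset.Icc 2 (n-1), (That α T r N n j - That α T r N n (j-1)) *
              ∫ y in node ℓ M m..node ℓ M (m+1), (uh j m).eval y * (uh n m).eval y := by
      intro m hm
      obtain ⟨h1m, h2m⟩ := Finset.mem_Icc.mp hm
      exact piece_split (hnode_succ m) _ _ _ _ _ _ _
        ((hfc n).mono (hsubI m h1m h2m)) (Polynomial.continuous _)
        (Polynomial.continuous _) (fun j => Polynomial.continuous _)
    have hstep : (∑ m ∈ Finset.Icc 1 M, ∫ y in node ℓ M m..node ℓ M (m+1),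
          (f n y + That α T r N n 1 * (uh 1 m).eval y +
            ∑ j ∈ Finset.Icc 2 (n-1),
              (That α T r N n j - That α T r N n (j-1)) * (uh j m).eval y)
            * (uh n m).eval y)
        = (∑ m ∈ Finset.Icc 1 M,
            ∫ y in node ℓ M m..node ℓ M (m+1), f n y * (uh n m).eval y)
          + That α T r N n 1 * (∑ m ∈ Finset.Icc 1 M,
              ∫ y in node ℓ M m..node ℓ M (m+1), (uh 1 m).eval y * (uh n m).eval y)
          + ∑ j ∈ Finset.Icc 2 (n-1), ((That α T r N n j - That α T r N n (j-1)) *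
              ∑ m ∈ Finset.Icc 1 M,
                ∫ y in node ℓ M m..node ℓ M (m+1), (uh j m).eval y * (uh n m).eval y) := by
      rw [Finset.sum_congr rfl hsplitm, Finset.sum_add_distrib, Finset.sum_add_distrib,
        ← Finset.mul_sum]
      congr 1
      rw [Finset.sum_comm]
      exact Finset.sum_congr rfl fun j _ => (Finset.mul_sum _ _ _).symm
    -- Cauchy–Schwarz bounds
    have hbU : ∀ q : ℕ → Polynomial ℝ,
        (∑ m ∈ Finset.Icc 1 M,
            ∫ y in node ℓ M m..node ℓ M (m+1), (q m).eval y * (uh n m).eval y)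
          ≤ brokenL2 ℓ M q * brokenL2 ℓ M (uh n) := by
      intro q
      have h := broken_cs hnode_succ (fun m y => (q m).eval y) (fun m y => (uh n m).eval y)
        (fun m _ => (Polynomial.continuous _).continuousOn)
        (fun m _ => (Polynomial.continuous _).continuousOn)
      simpa [brokenL2] using h
    have hbf : (∑ m ∈ Finset.Icc 1 M,
          ∫ y in node ℓ M m..node ℓ M (m+1), f n y * (uh n m).eval y)
        ≤ funL2 ℓ (f n) * brokenL2 ℓ M (uh n) := by
      have h := broken_cs hnode_succ (fun _ y => f n y) (fun m y => (uh n m).eval y)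
        (fun m hm => (hfc n).mono
          (hsubI m (Finset.mem_Icc.mp hm).1 (Finset.mem_Icc.mp hm).2))
        (fun m _ => (Polynomial.continuous _).continuousOn)
      simpa [brokenL2, funL2, hchain (f n) (hfc n)] using h
    -- assemble
    have hQb : (∑ m ∈ Finset.Icc 1 M,
            ∫ y in node ℓ M m..node ℓ M (m+1), f n y * (uh n m).eval y)
          + That α T r N n 1 * (∑ m ∈ Finset.Icc 1 M,
              ∫ y in node ℓ M m..node ℓ M (m+1), (uh 1 m).eval y * (uh n m).eval y)
          + ∑ j ∈ Finset.Icc 2 (n-1), ((That α T r N n j - That α T r N n (j-1)) *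
              ∑ m ∈ Finset.Icc 1 M,
                ∫ y in node ℓ M m..node ℓ M (m+1), (uh j m).eval y * (uh n m).eval y)
        ≤ (funL2 ℓ (f n) + That α T r N n 1 * brokenL2 ℓ M (uh 1)
            + ∑ j ∈ Finset.Icc 2 (n-1),
                (That α T r N n j - That α T r N n (j-1)) * brokenL2 ℓ M (uh j))
          * brokenL2 ℓ M (uh n) := by
      rw [add_mul, add_mul, Finset.sum_mul]
      refine add_le_add (add_le_add hbf ?_) ?_
      · calc That α T r N n 1 * (∑ m ∈ Finset.Icc 1 M,
              ∫ y in node ℓ M m..node ℓ M (m+1), (uh 1 m).eval y * (uh n m).eval y)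
            ≤ That α T r N n 1 * (brokenL2 ℓ M (uh 1) * brokenL2 ℓ M (uh n)) :=
              mul_le_mul_of_nonneg_left (hbU (uh 1)) (hThat1nn n hn2)
          _ = That α T r N n 1 * brokenL2 ℓ M (uh 1) * brokenL2 ℓ M (uh n) := by ring
      · refine Finset.sum_le_sum fun j hj => ?_
        obtain ⟨hj2, hjn1⟩ := Finset.mem_Icc.mp hj
        have hΔ : 0 ≤ That α T r N n j - That α T r N n (j-1) :=
          sub_nonneg.mpr (hΔnn n j hj2 (by omega))
        calc (That α T r N n j - That α T r N n (j-1)) *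
              (∑ m ∈ Finset.Icc 1 M,
                ∫ y in node ℓ M m..node ℓ M (m+1), (uh j m).eval y * (uh n m).eval y)
            ≤ (That α T r N n j - That α T r N n (j-1)) *
                (brokenL2 ℓ M (uh j) * brokenL2 ℓ M (uh n)) :=
              mul_le_mul_of_nonneg_left (hbU (uh j)) hΔ
          _ = (That α T r N n j - That α T r N n (j-1)) * brokenL2 ℓ M (uh j)
                * brokenL2 ℓ M (uh n) := by ring
    have hfinal : That α T r N n (n-1) * (brokenL2 ℓ M (uh n) * brokenL2 ℓ M (uh n))
        ≤ (funL2 ℓ (f n) + That α T r N n 1 * brokenL2 ℓ M (uh 1)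
            + ∑ j ∈ Finset.Icc 2 (n-1),
                (That α T r N n j - That α T r N n (j-1)) * brokenL2 ℓ M (uh j))
          * brokenL2 ℓ M (uh n) := by
      rw [hSnX]
      calc That α T r N n (n-1) * (∑ m ∈ Finset.Icc 1 M,
            ∫ y in node ℓ M m..node ℓ M (m+1), ((uh n m).eval y)^2)
          ≤ nipg ℓ M (fun y => p (tmesh T r N n) * a y)
              (fun y => p (tmesh T r N n) * b y + That α T r N n (n-1)) σ (uh n) (uh n) :=
            hcoer
        _ = _ := hs
        _ = _ := hstep
        _ ≤ _ := hQb
    have hQnn : 0 ≤ funL2 ℓ (f n) + That α T r N n 1 * brokenL2 ℓ M (uh 1)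
        + ∑ j ∈ Finset.Icc 2 (n-1),
            (That α T r N n j - That α T r N n (j-1)) * brokenL2 ℓ M (uh j) := by
      have h1 : 0 ≤ funL2 ℓ (f n) := Real.sqrt_nonneg _
      have h2 : 0 ≤ That α T r N n 1 * brokenL2 ℓ M (uh 1) :=
        mul_nonneg (hThat1nn n hn2) (Real.sqrt_nonneg _)
      have h3 : 0 ≤ ∑ j ∈ Finset.Icc 2 (n-1),
          (That α T r N n j - That α T r N n (j-1)) * brokenL2 ℓ M (uh j) :=
        Finset.sum_nonneg fun j hj => by
          obtain ⟨hj2, hjn1⟩ := Finset.mem_Icc.mp hj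
          exact mul_nonneg (sub_nonneg.mpr (hΔnn n j hj2 (by omega))) (Real.sqrt_nonneg _)
      linarith
    rcases eq_or_lt_of_le (Real.sqrt_nonneg (∑ m ∈ Finset.Icc 1 M,
        ∫ y in node ℓ M m..node ℓ M (m+1), ((uh n m).eval y)^2)) with h0 | h0
    · have hz : brokenL2 ℓ M (uh n) = 0 := by unfold brokenL2; exact h0.symm
      rw [hz, mul_zero]
      exact hQnn
    · have hz : 0 < brokenL2 ℓ M (uh n) := by unfold brokenL2; exact h0
      have h1 : That α T r N n (n-1) * brokenL2 ℓ M (uh n) * brokenL2 ℓ M (uh n)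
          ≤ (funL2 ℓ (f n) + That α T r N n 1 * brokenL2 ℓ M (uh 1)
              + ∑ j ∈ Finset.Icc 2 (n-1),
                  (That α T r N n j - That α T r N n (j-1)) * brokenL2 ℓ M (uh j))
            * brokenL2 ℓ M (uh n) := by
        rw [mul_assoc]
        exact hfinal
      exact le_of_mul_le_mul_right h1 hz

  -- final induction
  intro n
  induction n using Nat.strong_induction_on with
  | _ n IH =>
    intro hn2 hnN
    have hfF : ∀ j, 2 ≤ j → j ≤ n → funL2 ℓ (f j) ≤
        (Finset.Icc 2 n).sup' (Finset.nonempty_Icc.mpr hn2) (fun j => funL2 ℓ (f j)) :=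
      fun j h1 h2 => Finset.le_sup' (fun j => funL2 ℓ (f j)) (Finset.mem_Icc.mpr ⟨h1, h2⟩)
    set F := (Finset.Icc 2 n).sup' (Finset.nonempty_Icc.mpr hn2) (fun j => funL2 ℓ (f j))
      with hFdef
    have hF0 : 0 ≤ F := le_trans (Real.sqrt_nonneg _) (hfF n hn2 le_rfl)
    have hTa : 0 < T ^ α := Real.rpow_pos_of_pos hT _
    have hW0 : 0 ≤ C * T ^ α * F := by positivity
    have hS1 : 0 ≤ brokenL2 ℓ M (uh 1) := Real.sqrt_nonneg _
    have hIH : ∀ j, 1 ≤ j → j ≤ n - 1 →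
        brokenL2 ℓ M (uh j) ≤ brokenL2 ℓ M (uh 1) + C * T ^ α * F := by
      intro j h1 h2
      rcases eq_or_lt_of_le h1 with h | h
      · rw [← h]; linarith
      · have hj2 : 2 ≤ j := h
        have hjN : j ≤ N + 1 := by omega
        refine (IH j (by omega) hj2 hjN).trans ?_
        have hsup : (Finset.Icc 2 j).sup' (Finset.nonempty_Icc.mpr hj2)
            (fun i => funL2 ℓ (f i)) ≤ F := by
          apply Finset.sup'_le
          intro i hi
          obtain ⟨hi1, hi2⟩ := Finset.mem_Icc.mp hi
          exact hfF i hi1 (by omega)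
        have hmm := mul_le_mul_of_nonneg_left hsup (by positivity : (0:ℝ) ≤ C * T ^ α)
        linarith
    have hkey := key n hn2 hnN
    have htel : (∑ j ∈ Finset.Icc 2 (n-1),
        (That α T r N n j - That α T r N n (j-1)))
        = That α T r N n (n-1) - That α T r N n 1 :=
      telescope_Icc (fun j => That α T r N n j) (n-1) (by omega)
    have hsum : (∑ j ∈ Finset.Icc 2 (n-1),
          (That α T r N n j - That α T r N n (j-1)) * brokenL2 ℓ M (uh j))
        ≤ (That α T r N n (n-1) - That α T r N n 1)
            * (brokenL2 ℓ M (uh 1) + C * T ^ α * F) := by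
      rw [← htel, Finset.sum_mul]
      refine Finset.sum_le_sum fun j hj => ?_
      obtain ⟨hj2, hjn1⟩ := Finset.mem_Icc.mp hj
      have hΔ : 0 ≤ That α T r N n j - That α T r N n (j-1) :=
        sub_nonneg.mpr (hΔnn n j hj2 (by omega))
      exact mul_le_mul_of_nonneg_left (hIH j (by omega) hjn1) hΔ
    have hfn : funL2 ℓ (f n) ≤ F := hfF n hn2 le_rfl
    have h1C : 1 ≤ That α T r N n 1 * (C * T ^ α) := hThat1CT n hn2 hnN
    have hpos := hThatpos n hn2
    have hFW : F ≤ That α T r N n 1 * (C * T ^ α) * F :=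
      le_mul_of_one_le_left hF0 h1C
    have hmain : That α T r N n (n-1) * brokenL2 ℓ M (uh n)
        ≤ That α T r N n (n-1) * (brokenL2 ℓ M (uh 1) + C * T ^ α * F) := by
      nlinarith [hkey, hsum, hfn, hFW]
    exact le_of_mul_le_mul_left hmain hpos
end
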